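/- Let n, p be positive natural numbers, let φ : Fin n → Fin p → ℝ and m : Fin n → Fin p → ℝ be given arrays, and for each i let hᵢ : ℝ → ℝ be convex and differentiable. Fix λ ≥ 0 and define the ℓ¹-penalized generalized Riesz regression objective L(β) = (1/n)·Σᵢ ( hᵢ(Σⱼ φᵢⱼ βⱼ) − Σⱼ mᵢⱼ βⱼ ) + λ·Σⱼ |βⱼ| for β ∈ ℝᵖ. If β̂ is a global minimizer of L and α̂ᵢ = hᵢ'(Σⱼ φᵢⱼ β̂ⱼ), then for every j, | (1/n)·Σᵢ ( α̂ᵢ φᵢⱼ − mᵢⱼ ) | ≤ λ. (Automatic regressor balancing with ℓ¹ penalty: the maximum absolute sample moment imbalance over the basis functions is bounded by the regularization parameter λ.) -/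

import Mathlib

/-- Automatic regressor balancing with ℓ¹ penalty: if `β̂` globally minimizes the
ℓ¹-penalized generalized Riesz regression objective, then for every basis index `j`
the absolute sample moment imbalance is bounded by `λ`. -/
theorem arb_l1_balancing
    (n p : ℕ) (hn : 0 < n) (hp : 0 < p)
    (φ m : Fin n → Fin p → ℝ)
    (h : Fin n → ℝ → ℝ)
    (hconv : ∀ i, ConvexOn ℝ Set.univ (h i))
    (hdiff : ∀ i, Differentiable ℝ (h i))
    (lam : ℝ) (hlam : 0 ≤ lam)
    (L : (Fin p → ℝ) → ℝ)
    (hL : ∀ β : Fin p → ℝ,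
      L β = (1 / (n : ℝ)) * ∑ i, (h i (∑ j, φ i j * β j) - ∑ j, m i j * β j)
            + lam * ∑ j, |β j|)
    (βhat : Fin p → ℝ)
    (hmin : ∀ β : Fin p → ℝ, L βhat ≤ L β)
    (αhat : Fin n → ℝ)
    (hαhat : ∀ i, αhat i = deriv (h i) (∑ j, φ i j * βhat j)) :
    ∀ j : Fin p,
      |(1 / (n : ℝ)) * ∑ i, (αhat i * φ i j - m i j)| ≤ lam := by
  intro j
  set A : Fin n → ℝ := fun i => ∑ k, φ i k * βhat k with hA
  set B : Fin n → ℝ := fun i => ∑ k, m i k * βhat k with hB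
  set D : ℝ := (1 / (n : ℝ)) * ∑ i, (αhat i * φ i j - m i j) with hD
  set g : ℝ → ℝ :=
    fun t => (1 / (n : ℝ)) * ∑ i, (h i (A i + t * φ i j) - (B i + t * m i j)) with hg
  -- derivative of g at 0
  have hder : HasDerivAt g D 0 := by
    have hterm : ∀ i : Fin n,
        HasDerivAt (fun t => h i (A i + t * φ i j) - (B i + t * m i j))
          (αhat i * φ i j - m i j) 0 := by
      intro i
      have hinner : HasDerivAt (fun t : ℝ => A i + t * φ i j) (φ i j) 0 := by
        simpa using (hasDerivAt_id (0 : ℝ)).mul_const (φ i j) |>.const_add (A i)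
      have hout : HasDerivAt (h i) (deriv (h i) (A i)) (A i) :=
        ((hdiff i) (A i)).hasDerivAt
      have hout' : HasDerivAt (h i) (deriv (h i) (A i)) ((fun t : ℝ => A i + t * φ i j) 0) := by
        simpa using hout
      have hcomp : HasDerivAt (fun t => h i (A i + t * φ i j))
          (deriv (h i) (A i) * φ i j) 0 := by
        exact hout'.comp 0 hinner
      have hlin : HasDerivAt (fun t : ℝ => B i + t * m i j) (m i j) 0 := by
        simpa using (hasDerivAt_id (0 : ℝ)).mul_const (m i j) |>.const_add (B i)
      have := hcomp.sub hlin
      rw [hαhat i]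
      exact this
    have hsum : HasDerivAt (fun t => ∑ i, (h i (A i + t * φ i j) - (B i + t * m i j)))
        (∑ i, (αhat i * φ i j - m i j)) 0 := HasDerivAt.fun_sum fun i _ => hterm i
    simpa [hg, hD] using hsum.const_mul (1 / (n : ℝ))
  -- key inequality from minimality
  have key : ∀ t : ℝ, g 0 ≤ g t + lam * |t| := by
    intro t
    have hupd : ∀ (c : Fin p → ℝ),
        ∑ k, c k * Function.update βhat j (βhat j + t) k
          = (∑ k, c k * βhat k) + t * c j := by
      intro c
      have : ∀ k : Fin p, c k * Function.update βhat j (βhat j + t) k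
          = c k * βhat k + (if k = j then c k * t else 0) := by
        intro k
        by_cases hk : k = j
        · subst hk; simp [Function.update_self]; ring
        · simp [Function.update_of_ne hk, hk]
      rw [Finset.sum_congr rfl fun k _ => this k, Finset.sum_add_distrib,
        Finset.sum_ite_eq' Finset.univ j fun k => c k * t]
      simp [mul_comm]
    have hpen : ∑ k, |Function.update βhat j (βhat j + t) k|
        ≤ (∑ k, |βhat k|) + |t| := by
      have h1 : ∑ k, |Function.update βhat j (βhat j + t) k|
          = ∑ k, Function.update (fun k => |βhat k|) j |βhat j + t| k := by
        refine Finset.sum_congr rfl fun k _ => ?_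
        exact (Function.apply_update (fun _ x => |x|) βhat j (βhat j + t) k)
      rw [h1, Finset.sum_update_of_mem (Finset.mem_univ j)]
      have h2 : ∑ k, |βhat k|
          = |βhat j| + ∑ k ∈ Finset.univ \ {j}, |βhat k| := by
        rw [Finset.sum_eq_add_sum_sdiff_singleton_of_mem (Finset.mem_univ j)]
      rw [h2]
      have := abs_add_le (βhat j) t
      linarith
    have hmint := hmin (Function.update βhat j (βhat j + t))
    rw [hL, hL] at hmint
    have hL0 : (1 / (n : ℝ)) * ∑ i, (h i (∑ k, φ i k * βhat k) - ∑ k, m i k * βhat k)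
        = g 0 := by simp [hg, hA, hB]
    have hLt : (1 / (n : ℝ)) * ∑ i, (h i (∑ k, φ i k * Function.update βhat j (βhat j + t) k)
          - ∑ k, m i k * Function.update βhat j (βhat j + t) k) = g t := by
      simp only [hg]
      congr 1
      refine Finset.sum_congr rfl fun i _ => ?_
      rw [hupd (φ i), hupd (m i)]
    rw [hL0, hLt] at hmint
    have hpen' : lam * ∑ k, |Function.update βhat j (βhat j + t) k|
        ≤ lam * ((∑ k, |βhat k|) + |t|) := by
      exact mul_le_mul_of_nonneg_left hpen hlam
    nlinarith [hmint, hpen']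
  -- conclude |D| ≤ lam from one-sided slopes
  have hslope : Filter.Tendsto (slope g 0) (nhdsWithin 0 {(0:ℝ)}ᶜ) (nhds D) :=
    hasDerivAt_iff_tendsto_slope.mp hder
  have hle : D ≤ lam := by
    have hmono : Filter.Tendsto (slope g 0) (nhdsWithin 0 (Set.Iio 0)) (nhds D) :=
      hslope.mono_left (nhdsWithin_mono 0 fun x hx => ne_of_lt hx)
    refine le_of_tendsto hmono ?_
    refine eventually_nhdsWithin_of_forall fun t ht => ?_
    have ht' : t < 0 := ht
    have hk := key t
    have habs : |t| = -t := abs_of_neg ht'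
    rw [habs] at hk
    have : lam * t ≤ g t - g 0 := by linarith
    rw [slope_def_field]
    have : (g t - g 0) / t ≤ lam := by
      rw [div_le_iff_of_neg ht']
      linarith
    simpa [div_eq_inv_mul, sub_zero] using this
  have hge : -lam ≤ D := by
    have hmono : Filter.Tendsto (slope g 0) (nhdsWithin 0 (Set.Ioi 0)) (nhds D) :=
      hslope.mono_left (nhdsWithin_mono 0 fun x hx => ne_of_gt hx)
    refine ge_of_tendsto hmono ?_
    refine eventually_nhdsWithin_of_forall fun t ht => ?_
    have ht' : 0 < t := ht
    have hk := key t
    have habs : |t| = t := abs_of_pos ht'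
    rw [habs] at hk
    have : -lam ≤ (g t - g 0) / t := by
      rw [le_div_iff₀ ht']
      linarith
    simpa [slope_def_field, div_eq_inv_mul, sub_zero] using this
  rw [abs_le]
  exact ⟨by linarith, hle⟩
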